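/- Let S be a nondegenerate simplex in ℝ^d with vertices p₁,…,p_{d+1} containing the origin o in its interior. For each i, let n_i be the orthogonal projection of o onto the facet hyperplane not containing p_i, and let α_i be the angle between p_i and n_i. Then o is the centroid of S if and only if cos(α_i)·|p_i| = −d·|n_i| for all i. -/

import Mathlib

open scoped RealInnerProductSpace

noncomputable section

abbrev En (d : ℕ) := EuclideanSpace ℝ (Fin d)

/-- Let `S` be a nondegenerate simplex in `ℝ^d` with vertices `p 0, …, p d` and the
origin in its interior, and for each `i` let `n i` be the orthogonal projection of the
origin onto the facet hyperplane spanned by the vertices other than `p i`. Then the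
origin is the centroid of `S` if and only if `cos α_i * |p_i| = -d * |n_i|` for all `i`,
where `cos α_i = ⟪p_i, n_i⟫ / (|p_i| |n_i|)` is the cosine of the angle between
`p_i` and `n_i`. -/
theorem centroid_iff_cos_condition (d : ℕ) (hd : 0 < d)
    (p n : Fin (d + 1) → En d) (hp : AffineIndependent ℝ p)
    (h0 : (0 : En d) ∈ interior (convexHull ℝ (Set.range p)))
    (hn : ∀ i, n i ∈ affineSpan ℝ (p '' {j | j ≠ i}) ∧
      ∀ x ∈ affineSpan ℝ (p '' {j | j ≠ i}), ⟪x - n i, n i⟫ = 0) :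
    (((d : ℝ) + 1)⁻¹ • ∑ i, p i = 0) ↔
      ∀ i, ⟪p i, n i⟫ / (‖p i‖ * ‖n i‖) * ‖p i‖ = -(d : ℝ) * ‖n i‖ := by
  classical
  have htop : affineSpan ℝ (Set.range p) = ⊤ :=
    interior_convexHull_nonempty_iff_affineSpan_eq_top.mp ⟨0, h0⟩
  let b : AffineBasis (Fin (d + 1)) ℝ (En d) := ⟨p, hp, htop⟩
  have hbp : ⇑b = p := rfl
  have h0' : ∀ i, 0 < b.coord i 0 := by
    have := b.interior_convexHull
    rw [hbp] at this
    rw [this] at h0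
    exact h0
  have hdR : ((d : ℝ) + 1) ≠ 0 := by positivity
  -- barycentric coordinates of the origin
  set c : Fin (d + 1) → ℝ := fun i => b.coord i 0 with hc
  have hzero : ∑ j, c j • p j = 0 := by
    have := b.linear_combination_coord_eq_self 0
    rw [hbp] at this
    exact this
  have hsum : ∑ j, c j = 1 := b.sum_coord_apply_eq_one 0
  -- `b.coord i` vanishes on the facet hyperplane
  have hcoord_zero : ∀ i, ∀ x ∈ affineSpan ℝ (p '' {j | j ≠ i}), b.coord i x = 0 := by
    intro i x hx
    have hle : affineSpan ℝ (p '' {j | j ≠ i}) ≤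
        AffineSubspace.comap (b.coord i) (AffineSubspace.mk' (0 : ℝ) ⊥) := by
      rw [affineSpan_le]
      rintro y ⟨j, hj, rfl⟩
      simp only [Set.mem_setOf_eq] at hj
      have : b.coord i (b j) = 0 := b.coord_apply_ne (Ne.symm hj)
      simp only [SetLike.mem_coe, AffineSubspace.mem_comap,
        AffineSubspace.mem_mk', Submodule.mem_bot, vsub_eq_sub, sub_zero]
      exact this
    have := hle hx
    simpa [AffineSubspace.mem_comap, AffineSubspace.mem_mk'] using this
  -- vertices on the facet have fixed inner product with the foot of perpendicular
  have hpj : ∀ i j, j ≠ i → ⟪p j, n i⟫ = ‖n i‖ ^ 2 := by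
    intro i j hj
    have hmem : p j ∈ affineSpan ℝ (p '' {j | j ≠ i}) :=
      subset_affineSpan ℝ _ ⟨j, hj, rfl⟩
    have := (hn i).2 (p j) hmem
    rw [inner_sub_left, sub_eq_zero] at this
    rw [this, real_inner_self_eq_norm_sq]
  have hne : ∀ i, n i ≠ 0 := by
    intro i h
    have h1 : b.coord i (n i) = 0 := hcoord_zero i (n i) (hn i).1
    rw [h] at h1
    exact absurd h1 (ne_of_gt (h0' i))
  have hpne : ∀ i, p i ≠ 0 := by
    have : Nontrivial (Fin (d + 1)) := Fin.nontrivial_iff_two_le.mpr (by omega)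
    intro i h
    obtain ⟨j, hj⟩ := exists_ne i
    have h1 : b.coord j (b i) = 0 := b.coord_apply_ne hj
    rw [hbp, h] at h1
    exact absurd h1 (ne_of_gt (h0' j))
  -- the key relation
  have hR : ∀ i, c i * ⟪p i, n i⟫ + (1 - c i) * ‖n i‖ ^ 2 = 0 := by
    intro i
    have h2 : ⟪∑ j, c j • p j, n i⟫ = 0 := by rw [hzero]; exact inner_zero_left _
    rw [sum_inner] at h2
    simp only [real_inner_smul_left] at h2
    rw [← Finset.add_sum_erase _ _ (Finset.mem_univ i)] at h2
    have h3 : ∑ j ∈ Finset.univ.erase i, c j * ⟪p j, n i⟫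
        = ∑ j ∈ Finset.univ.erase i, c j * ‖n i‖ ^ 2 := by
      refine Finset.sum_congr rfl fun j hj => ?_
      rw [hpj i j (Finset.ne_of_mem_erase hj)]
    rw [h3, ← Finset.sum_mul] at h2
    have h4 : ∑ j ∈ Finset.univ.erase i, c j = 1 - c i := by
      have := Finset.add_sum_erase _ c (Finset.mem_univ i)
      rw [hsum] at this
      linarith
    rw [h4] at h2
    linarith
  have hcpos : ∀ i, 0 < c i := h0'
  have hnpos : ∀ i, 0 < ‖n i‖ := fun i => norm_pos_iff.mpr (hne i)
  have hppos : ∀ i, 0 < ‖p i‖ := fun i => norm_pos_iff.mpr (hpne i)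
  constructor
  · intro hcent i
    -- coordinates of the origin are all equal to (d+1)⁻¹
    have hw : ∑ _j : Fin (d + 1), (((d : ℝ) + 1)⁻¹ : ℝ) = 1 := by
      rw [Finset.sum_const, Finset.card_univ, Fintype.card_fin, nsmul_eq_mul]
      push_cast
      field_simp
    have hcomb : (Finset.univ.affineCombination ℝ b fun _ => ((d : ℝ) + 1)⁻¹) = 0 := by
      rw [Finset.univ.affineCombination_eq_linear_combination _ _ hw, hbp, ← Finset.smul_sum]
      exact hcent
    have hci : c i = ((d : ℝ) + 1)⁻¹ := by
      have := b.coord_apply_combination_of_mem (Finset.mem_univ i)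
        (w := fun _ => ((d : ℝ) + 1)⁻¹) hw
      rw [hcomb] at this
      exact this
    have hc1 : ((d : ℝ) + 1) * c i = 1 := by rw [hci]; field_simp
    have ht : ⟪p i, n i⟫ = -(d : ℝ) * ‖n i‖ ^ 2 := by
      have hRi := hR i
      linear_combination ((d : ℝ) + 1) * hRi + (‖n i‖ ^ 2 - ⟪p i, n i⟫) * hc1
    have ha := (hppos i).ne'
    have hb2 := (hnpos i).ne'
    have key : ⟪p i, n i⟫ / (‖p i‖ * ‖n i‖) * ‖p i‖ = ⟪p i, n i⟫ / ‖n i‖ := by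
      rw [div_mul_eq_mul_div, mul_comm (⟪p i, n i⟫) ‖p i‖, mul_div_mul_left _ _ ha]
    rw [key, ht]
    field_simp
  · intro h
    -- derive the coordinates of the origin
    have hci : ∀ i, c i = ((d : ℝ) + 1)⁻¹ := by
      intro i
      have hi := h i
      have ha := (hppos i).ne'
      have hb2 := (hnpos i).ne'
      have key : ⟪p i, n i⟫ / (‖p i‖ * ‖n i‖) * ‖p i‖ = ⟪p i, n i⟫ / ‖n i‖ := by
        rw [div_mul_eq_mul_div, mul_comm (⟪p i, n i⟫) ‖p i‖, mul_div_mul_left _ _ ha]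
      rw [key] at hi
      have ht : ⟪p i, n i⟫ = -(d : ℝ) * ‖n i‖ ^ 2 := by
        have h5 := (div_eq_iff hb2).mp hi
        linear_combination h5
      have hRi := hR i
      rw [ht] at hRi
      have hsq : (0 : ℝ) < ‖n i‖ ^ 2 := by positivity
      have h6 : ‖n i‖ ^ 2 * (1 - ((d : ℝ) + 1) * c i) = 0 := by linear_combination hRi
      have h2 := mul_eq_zero.mp h6
      rcases h2 with h2 | h2
      · exact absurd h2 hsq.ne'
      · field_simp
        linarith
    calc ((d : ℝ) + 1)⁻¹ • ∑ i, p i = ∑ i, c i • p i := by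
          rw [Finset.smul_sum]
          exact Finset.sum_congr rfl fun i _ => by rw [hci i]
      _ = 0 := hzero
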